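/- Let a < b be real numbers, N ≥ 1 a natural number, and let R_1, …, R_N be independent random variables each uniformly distributed on [a, b]. Then for every δ ∈ (0, 1), with probability at least 1 − δ², |a/N + b − ((N + 1)/N) · max_{1 ≤ n ≤ N} R_n| ≤ (b − a)(N + 1)/(N²·δ). -/

import Mathlib

open MeasureTheory ProbabilityTheory

private lemma exp_neg_inv_le_sq {δ : ℝ} (h0 : 0 < δ) (h1 : δ < 1) :
    Real.exp (-(1/δ)) ≤ δ ^ 2 := by
  have hu : 0 < 1/δ := by positivity
  have hs : Real.sqrt (1/δ) ^ 2 = 1/δ := Real.sq_sqrt hu.le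
  have hlog : Real.log (Real.sqrt (1/δ)) ≤ Real.sqrt (1/δ) - 1 :=
    Real.log_le_sub_one_of_pos (Real.sqrt_pos.mpr hu)
  have hlog2 : Real.log (1/δ) = Real.log (1/δ) / 2 * 2 := by ring
  have hls : Real.log (Real.sqrt (1/δ)) = Real.log (1/δ) / 2 := Real.log_sqrt hu.le
  have hkey : 2 * Real.log (1/δ) ≤ 1/δ := by
    nlinarith [hs, hlog, hls, Real.sqrt_nonneg (1/δ), sq_nonneg (Real.sqrt (1/δ) - 2)]
  have hlogδ : Real.log (1/δ) = - Real.log δ := by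
    rw [one_div, Real.log_inv]
  have h2 : δ ^ 2 = Real.exp (2 * Real.log δ) := by
    rw [show (2:ℝ) * Real.log δ = Real.log δ + Real.log δ by ring,
      Real.exp_add, Real.exp_log h0]; ring
  rw [h2]
  apply Real.exp_le_exp.mpr
  rw [hlogδ] at hkey
  linarith

private lemma q_pow_le {δ : ℝ} (h0 : 0 < δ) (h1 : δ < 1) (N : ℕ) (hN : 1 ≤ N) :
    max ((N : ℝ)/((N:ℝ)+1) - 1/((N:ℝ)*δ)) 0 ^ N ≤ δ ^ 2 := by
  have hNr : (1:ℝ) ≤ (N:ℝ) := by exact_mod_cast hN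
  have hNδ : 0 < (N:ℝ) * δ := by positivity
  rcases le_or_gt ((N : ℝ)/((N:ℝ)+1) - 1/((N:ℝ)*δ)) 0 with hq | hq
  · rw [max_eq_right hq, zero_pow (by omega)]
    positivity
  · rw [max_eq_left hq.le]
    have h2 : (N : ℝ)/((N:ℝ)+1) - 1/((N:ℝ)*δ) ≤ 1 - 1/((N:ℝ)*δ) := by
      have : (N:ℝ)/((N:ℝ)+1) ≤ 1 := by
        rw [div_le_one (by linarith)]; linarith
      linarith
    have h3 : (1 : ℝ) - 1/((N:ℝ)*δ) ≤ Real.exp (-(1/((N:ℝ)*δ))) := by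
      have := Real.add_one_le_exp (-(1/((N:ℝ)*δ))); linarith
    calc ((N : ℝ)/((N:ℝ)+1) - 1/((N:ℝ)*δ)) ^ N
        ≤ (Real.exp (-(1/((N:ℝ)*δ)))) ^ N :=
          pow_le_pow_left₀ hq.le (le_trans h2 h3) N
      _ = Real.exp (-(1/δ)) := by
          rw [← Real.exp_nat_mul]
          congr 1
          field_simp
      _ ≤ δ ^ 2 := exp_neg_inv_le_sq h0 h1

private lemma abs_bound {a b S Nr δ : ℝ} (hab : a < b) (hNr : 1 ≤ Nr)
    (h0 : 0 < δ) (h1 : δ < 1) (hSb : S ≤ b)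
    (hSt : (a + Nr*b)/(Nr+1) - (b-a)/(Nr*δ) ≤ S) :
    |a/Nr + b - ((Nr+1)/Nr) * S| ≤ (b-a)*(Nr+1)/(Nr^2*δ) := by
  have hN0 : (0:ℝ) < Nr := by linarith
  have hN1 : (0:ℝ) < Nr + 1 := by linarith
  have hδN : 0 < Nr * δ := by positivity
  have e1 : a/Nr + b - ((Nr+1)/Nr) * S = ((Nr+1)/Nr) * ((a + Nr*b)/(Nr+1) - S) := by
    field_simp
  have e2 : (b-a)*(Nr+1)/(Nr^2*δ) = ((Nr+1)/Nr) * ((b-a)/(Nr*δ)) := by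
    field_simp
  rw [e1, e2, abs_mul, abs_of_pos (by positivity : (0:ℝ) < (Nr+1)/Nr)]
  apply mul_le_mul_of_nonneg_left _ (by positivity)
  rw [abs_le]
  have hcb : (a + Nr*b)/(Nr+1) - b = -((b-a)/(Nr+1)) := by field_simp; ring
  have hle : (b-a)/(Nr+1) ≤ (b-a)/(Nr*δ) := by
    apply div_le_div_of_nonneg_left (by linarith) hδN
    nlinarith
  constructor
  · linarith
  · linarith

theorem concentration_scaled_max_iid_uniform
    {Ω : Type*} [MeasurableSpace Ω] (P : Measure Ω) [IsProbabilityMeasure P]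
    (a b : ℝ) (hab : a < b) (N : ℕ) (hN : 1 ≤ N)
    (R : Fin N → Ω → ℝ) (hmeas : ∀ n, Measurable (R n))
    (hunif : ∀ n, Measure.map (R n) P
      = (ENNReal.ofReal (b - a))⁻¹ • volume.restrict (Set.Icc a b))
    (hindep : iIndepFun R P)
    (δ : ℝ) (hδ : δ ∈ Set.Ioo (0 : ℝ) 1) :
    1 - δ ^ 2 ≤
      (P {ω | |a / N + b - ((N + 1) / N) * (⨆ n, R n ω)|
        ≤ (b - a) * (N + 1) / (N ^ 2 * δ)}).toReal := by
  obtain ⟨hδ0, hδ1⟩ := hδ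
  have hba : (0:ℝ) < b - a := by linarith
  haveI : Nonempty (Fin N) := ⟨⟨0, by omega⟩⟩
  have hNr : (1:ℝ) ≤ (N:ℝ) := by exact_mod_cast hN
  have hN0 : (0:ℝ) < (N:ℝ) := by linarith
  have hNδ : (0:ℝ) < (N:ℝ) * δ := by positivity
  set t : ℝ := (a + (N:ℝ)*b)/((N:ℝ)+1) - (b-a)/((N:ℝ)*δ) with ht
  set E := {ω | |a / (N:ℝ) + b - (((N:ℝ) + 1) / (N:ℝ)) * (⨆ n, R n ω)|
        ≤ (b - a) * ((N:ℝ) + 1) / ((N:ℝ) ^ 2 * δ)} with hE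
  set G := ⋂ n, R n ⁻¹' Set.Icc a b with hG
  set H := ⋃ n, R n ⁻¹' Set.Ici t with hH
  have hsub : G ∩ H ⊆ E := by
    rintro ω ⟨hGω, hHω⟩
    simp only [hG, Set.mem_iInter, Set.mem_preimage] at hGω
    obtain ⟨m, hm⟩ := Set.mem_iUnion.mp hHω
    have hbdd : BddAbove (Set.range fun n => R n ω) :=
      (Set.finite_range _).bddAbove
    have hSb : (⨆ n, R n ω) ≤ b := ciSup_le fun n => (hGω n).2
    have hSt : t ≤ ⨆ n, R n ω := le_trans hm (le_ciSup hbdd m)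
    exact abs_bound hab hNr hδ0 hδ1 hSb hSt
  have hGm : MeasurableSet G :=
    MeasurableSet.iInter fun n => (hmeas n) measurableSet_Icc
  have hHm : MeasurableSet H :=
    MeasurableSet.iUnion fun n => (hmeas n) measurableSet_Ici
  have hPGc : P Gᶜ = 0 := by
    rw [hG, Set.compl_iInter]
    apply measure_iUnion_null
    intro n
    have hpre : (R n ⁻¹' Set.Icc a b)ᶜ = R n ⁻¹' (Set.Icc a b)ᶜ := rfl
    rw [hpre, ← Measure.map_apply (hmeas n) measurableSet_Icc.compl, hunif n]
    simp [Measure.restrict_apply measurableSet_Icc.compl]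
  have hHc : Hᶜ = ⋂ n, R n ⁻¹' Set.Iio t := by
    rw [hH, Set.compl_iUnion]
    congr 1
    ext n ω
    simp [not_le]
  have hq : ∀ n, P (R n ⁻¹' Set.Iio t) ≤ ENNReal.ofReal ((t - a)/(b - a)) := by
    intro n
    rw [← Measure.map_apply (hmeas n) measurableSet_Iio, hunif n]
    simp only [Measure.smul_apply, smul_eq_mul,
      Measure.restrict_apply measurableSet_Iio]
    have hsub2 : Set.Iio t ∩ Set.Icc a b ⊆ Set.Icc a t :=
      fun x hx => ⟨hx.2.1, hx.1.le⟩
    calc (ENNReal.ofReal (b-a))⁻¹ * volume (Set.Iio t ∩ Set.Icc a b)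
        ≤ (ENNReal.ofReal (b-a))⁻¹ * volume (Set.Icc a t) := by
          gcongr
      _ = (ENNReal.ofReal (b-a))⁻¹ * ENNReal.ofReal (t - a) := by
          rw [Real.volume_Icc]
      _ = ENNReal.ofReal ((t-a)/(b-a)) := by
          rw [ENNReal.ofReal_div_of_pos hba, ENNReal.div_eq_inv_mul]
  have hqval : (t - a)/(b - a) = (N:ℝ)/((N:ℝ)+1) - 1/((N:ℝ)*δ) := by
    rw [ht]
    field_simp
    ring
  have hPHc : P Hᶜ ≤ ENNReal.ofReal (δ ^ 2) := by
    rw [hHc, hindep.meas_iInter (fun n => ⟨Set.Iio t, measurableSet_Iio, rfl⟩)]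
    calc ∏ n, P (R n ⁻¹' Set.Iio t)
        ≤ ∏ _n : Fin N, ENNReal.ofReal ((t - a)/(b-a)) :=
          Finset.prod_le_prod' (fun n _ => hq n)
      _ = ENNReal.ofReal ((t-a)/(b-a)) ^ N := by
          simp [Finset.prod_const, Finset.card_univ]
      _ ≤ ENNReal.ofReal (δ ^ 2) := by
          rcases le_or_gt ((t-a)/(b-a)) 0 with h | h
          · rw [ENNReal.ofReal_eq_zero.mpr h, zero_pow (by omega)]
            exact zero_le
          · rw [← ENNReal.ofReal_pow h.le]
            apply ENNReal.ofReal_le_ofReal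
            have hb2 := q_pow_le hδ0 hδ1 N hN
            rw [max_eq_left (by rw [← hqval]; exact h.le)] at hb2
            rw [hqval]
            exact hb2
  have hmain : 1 - ENNReal.ofReal (δ^2) ≤ P E := by
    calc 1 - ENNReal.ofReal (δ^2)
        ≤ 1 - P ((G ∩ H)ᶜ) := by
          apply tsub_le_tsub_left
          calc P ((G ∩ H)ᶜ) = P (Gᶜ ∪ Hᶜ) := by rw [Set.compl_inter]
            _ ≤ P Gᶜ + P Hᶜ := measure_union_le _ _
            _ ≤ 0 + ENNReal.ofReal (δ^2) := add_le_add hPGc.le hPHc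
            _ = ENNReal.ofReal (δ^2) := zero_add _
      _ = P (G ∩ H) := by
          rw [← compl_compl (G ∩ H), measure_compl (hGm.inter hHm).compl
            (measure_ne_top P _), measure_univ, compl_compl]
      _ ≤ P E := measure_mono hsub
  rw [← ENNReal.ofReal_le_iff_le_toReal (measure_ne_top P E)]
  calc ENNReal.ofReal (1 - δ^2)
      = 1 - ENNReal.ofReal (δ^2) := by
        rw [ENNReal.ofReal_sub _ (by positivity), ENNReal.ofReal_one]
    _ ≤ P E := hmain
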